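/- Let x be a string over an alphabet Σ not containing the symbol 7, and let y = 7^{|x|} ++ y2 ++ 7^{|x|} where y2 is a string over Σ. Then δ(x,y) = min over all ordered partitions x = x1 ++ x2 ++ x3 of (δ(x1, 7^{|x|}) + δ(x2, y2) + δ(x3, 7^{|x|})). -/

import Mathlib

/-- Levenshtein cost structure, as in the Mathlib of December 2024
(`Mathlib/Data/List/EditDistance/Defs.lean`, since removed from Mathlib). -/
structure Levenshtein.Cost (α β δ : Type*) where
  delete : α → δ
  insert : β → δ
  substitute : α → β → δ

def Levenshtein.defaultCost {α : Type*} [DecidableEq α] : Levenshtein.Cost α α ℕ where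
  delete _ := 1
  insert _ := 1
  substitute a b := if a = b then 0 else 1

def Levenshtein.impl {α β δ : Type*} [AddZeroClass δ] [Min δ]
    (C : Levenshtein.Cost α β δ) (xs : List α) (y : β) (d : {r : List δ // 0 < r.length}) :
    {r : List δ // 0 < r.length} :=
  let ⟨ds, w⟩ := d
  xs.zip (ds.zip ds.tail) |>.foldr
    (init := ⟨[C.insert y + ds.getLast (List.length_pos_iff.mp w)], by simp⟩)
    (fun ⟨x, d₀, d₁⟩ ⟨r, w⟩ =>
      ⟨min (C.delete x + r[0]) (min (C.insert y + d₀) (C.substitute x y + d₁)) :: r, by simp⟩)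

def suffixLevenshtein {α β δ : Type*} [AddZeroClass δ] [Min δ]
    (C : Levenshtein.Cost α β δ) (xs : List α) (ys : List β) :
    {r : List δ // 0 < r.length} :=
  ys.foldr
    (Levenshtein.impl C xs)
    (xs.foldr (init := ⟨[0], by simp⟩) (fun a ⟨r, w⟩ => ⟨(C.delete a + r[0]) :: r, by simp⟩))

def levenshtein {α β δ : Type*} [AddZeroClass δ] [Min δ]
    (C : Levenshtein.Cost α β δ) (xs : List α) (ys : List β) : δ :=
  let ⟨r, w⟩ := suffixLevenshtein C xs ys
  r[0]

/-- Unit-cost edit distance between two lists over a decidable-eq alphabet. -/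
def editDist (a b : List ℕ) : ℕ :=
  levenshtein Levenshtein.defaultCost a b

namespace EditDistAux

def D : List ℕ → List ℕ → ℕ
  | [], ys => ys.length
  | _ :: xs, [] => xs.length + 1
  | a :: xs, b :: ys =>
    min (1 + D xs (b :: ys)) (min (1 + D (a :: xs) ys) ((if a = b then 0 else 1) + D xs ys))

lemma D_nil_right (xs : List ℕ) : D xs [] = xs.length := by
  cases xs <;> simp [D]

lemma tails_cons_ex (l : List ℕ) : ∃ T, l.tails = l :: T := by
  cases l <;> simp

lemma base (xs : List ℕ) :
    (suffixLevenshtein Levenshtein.defaultCost xs []).1 = xs.tails.map (fun t => D t []) := by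
  induction xs with
  | nil => simp [suffixLevenshtein, D]
  | cons a xs ih =>
    obtain ⟨T, hT⟩ := tails_cons_ex xs
    simp only [suffixLevenshtein, List.foldr_nil, List.foldr_cons] at ih ⊢
    generalize List.foldr _ _ xs = R at ih ⊢
    obtain ⟨r, w⟩ := R
    simp only at ih
    subst ih
    simp [hT, D_nil_right, Levenshtein.defaultCost]
    omega

lemma getLast_tails_nil (l : List ℕ) : ∀ h, l.tails.getLast h = [] := by
  induction l with
  | nil => intro h; rfl
  | cons a l ih => intro h; rw [List.getLast_congr _ (by simp) (List.tails_cons a l), List.getLast_cons (by cases l <;> simp)]; exact ih _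

lemma step (y : ℕ) (ys xs : List ℕ) (h) :
    (Levenshtein.impl Levenshtein.defaultCost xs y ⟨xs.tails.map (fun t => D t ys), h⟩).1 =
      xs.tails.map (fun t => D t (y :: ys)) := by
  have hl : ∀ (l : List ℕ) (h'), (l.tails.map (fun t => D t ys)).getLast h' = D [] ys := by
    intro l h'
    rw [List.getLast_map, getLast_tails_nil]
  simp only [Levenshtein.impl, hl]
  induction xs with
  | nil => simp [D, Levenshtein.defaultCost]; omega
  | cons a xs ih =>
    obtain ⟨T, hT⟩ := tails_cons_ex xs
    simp only [hT] at ih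
    simp only [List.tails_cons, hT, List.map_cons, List.tail_cons, List.zip_cons_cons,
      List.foldr_cons] at ih ⊢
    specialize ih (by simp)
    generalize List.foldr _ _ (List.zip xs _) = R at ih ⊢
    obtain ⟨r, w⟩ := R
    simp only at ih
    subst ih
    simp [D, Levenshtein.defaultCost]

lemma key (ys : List ℕ) : ∀ xs : List ℕ,
    (suffixLevenshtein Levenshtein.defaultCost xs ys).1 = xs.tails.map (fun t => D t ys) := by
  induction ys with
  | nil => exact base
  | cons y ys ih =>
    intro xs
    have e : suffixLevenshtein Levenshtein.defaultCost xs ys =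
        ⟨xs.tails.map (fun t => D t ys), by simp⟩ := Subtype.ext (ih xs)
    show (Levenshtein.impl Levenshtein.defaultCost xs y
      (suffixLevenshtein Levenshtein.defaultCost xs ys)).1 = _
    rw [e, step]

lemma ed_eq (xs ys : List ℕ) : editDist xs ys = D xs ys := by
  have h := key ys xs
  unfold editDist levenshtein
  generalize suffixLevenshtein Levenshtein.defaultCost xs ys = R at h ⊢
  obtain ⟨r, w⟩ := R
  simp only at h
  subst h
  obtain ⟨T, hT⟩ := tails_cons_ex xs
  simp [hT]

lemma ed_nil_nil : editDist [] [] = 0 := by simp [ed_eq, D]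

lemma ed_nil_cons (y ys) : editDist [] (y :: ys) = 1 + editDist [] ys := by
  simp [ed_eq, D]; omega

lemma ed_cons_nil (a xs) : editDist (a :: xs) [] = 1 + editDist xs [] := by
  simp [ed_eq, D, D_nil_right]; omega

lemma ed_cons_cons (a xs b ys) :
    editDist (a :: xs) (b :: ys) =
      min (1 + editDist xs (b :: ys))
        (min (1 + editDist (a :: xs) ys)
          ((if a = b then 0 else 1) + editDist xs ys)) := by
  simp only [ed_eq, D]

lemma sub_le_one (a b : ℕ) : (if a = b then 0 else 1) ≤ 1 := by
  split <;> omega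

/-- insertion bound -/
lemma lemA (xs : List ℕ) (b ys) : editDist xs (b :: ys) ≤ 1 + editDist xs ys := by
  cases xs with
  | nil => rw [ed_nil_cons]
  | cons a xs =>
    rw [ed_cons_cons]
    exact min_le_of_right_le (min_le_left _ _)

/-- deletion bound -/
lemma lemB (a : ℕ) (xs ys : List ℕ) : editDist (a :: xs) ys ≤ 1 + editDist xs ys := by
  cases ys with
  | nil => rw [ed_cons_nil]
  | cons b ys => rw [ed_cons_cons]; exact min_le_left _ _

lemma ed_nil_left (ys : List ℕ) : editDist [] ys = ys.length := by
  induction ys with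
  | nil => simp [ed_nil_nil]
  | cons y ys ih => rw [ed_nil_cons, ih]; simp; omega

/-- subadditivity -/
lemma ineq1 (x1 : List ℕ) : ∀ (u x2 v : List ℕ),
    editDist (x1 ++ x2) (u ++ v) ≤ editDist x1 u + editDist x2 v := by
  induction x1 with
  | nil =>
    intro u
    induction u with
    | nil => intro x2 v; simp [ed_nil_nil]
    | cons b u ihu =>
      intro x2 v
      have h1 := lemA x2 b (u ++ v)
      have h2 := ihu x2 v
      simp only [List.nil_append, List.cons_append] at h1 h2 ⊢
      rw [ed_nil_cons]
      omega
  | cons a x1 ih =>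
    intro u
    induction u with
    | nil =>
      intro x2 v
      have h1 := ih [] x2 v
      have h2 := lemB a (x1 ++ x2) v
      simp only [List.nil_append, List.cons_append] at h1 h2 ⊢
      rw [ed_cons_nil]
      omega
    | cons b u ihu =>
      intro x2 v
      have h1 := ih (b :: u) x2 v
      have h2 := ihu x2 v
      have h3 := ih u x2 v
      simp only [List.cons_append] at h1 h2 h3 ⊢
      rw [ed_cons_cons a (x1 ++ x2) b (u ++ v), ed_cons_cons a x1 b u,
        ← min_add_add_right, ← min_add_add_right]
      refine le_min ?_ (le_min ?_ ?_)
      · exact le_trans (min_le_left _ _) (by omega)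
      · exact le_trans (min_le_of_right_le (min_le_left _ _)) (by omega)
      · exact le_trans (min_le_of_right_le (min_le_right _ _)) (by omega)

/-- existence of an optimal split -/
lemma ineq2 (x : List ℕ) : ∀ (u v : List ℕ),
    ∃ x1 x2 : List ℕ, x = x1 ++ x2 ∧
      editDist x1 u + editDist x2 v ≤ editDist x (u ++ v) := by
  induction x with
  | nil =>
    intro u v
    refine ⟨[], [], rfl, ?_⟩
    simp [ed_nil_left]
  | cons a x ih =>
    intro u v
    induction u with
    | nil =>
      exact ⟨[], a :: x, rfl, by simp [ed_nil_nil]⟩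
    | cons b u ihu =>
      obtain ⟨p1, p2, hp, hple⟩ := ih (b :: u) v
      obtain ⟨q1, q2, hq, hqle⟩ := ihu
      obtain ⟨s1, s2, hs, hsle⟩ := ih u v
      have hE : editDist (a :: x) ((b :: u) ++ v) =
          min (1 + editDist x (b :: (u ++ v)))
            (min (1 + editDist (a :: x) (u ++ v))
              ((if a = b then 0 else 1) + editDist x (u ++ v))) := by
        simp only [List.cons_append]
        rw [ed_cons_cons]
      rcases min_cases (1 + editDist x (b :: (u ++ v)))
          (min (1 + editDist (a :: x) (u ++ v))
            ((if a = b then 0 else 1) + editDist x (u ++ v))) with ⟨he, _⟩ | ⟨he, _⟩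
      · rw [he] at hE
        refine ⟨a :: p1, p2, by rw [hp, List.cons_append], ?_⟩
        have hcut := lemB a p1 (b :: u)
        have hple' : editDist p1 (b :: u) + editDist p2 v ≤ editDist x (b :: (u ++ v)) := by
          simpa using hple
        omega
      · rw [he] at hE
        rcases min_cases (1 + editDist (a :: x) (u ++ v))
            ((if a = b then 0 else 1) + editDist x (u ++ v)) with ⟨he2, _⟩ | ⟨he2, _⟩
        · rw [he2] at hE
          refine ⟨q1, q2, hq, ?_⟩
          have := lemA q1 b u
          omega
        · rw [he2] at hE
          refine ⟨a :: s1, s2, by rw [hs, List.cons_append], ?_⟩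
          have hsub : editDist (a :: s1) (b :: u) ≤ (if a = b then 0 else 1) + editDist s1 u := by
            rw [ed_cons_cons]
            exact min_le_of_right_le (min_le_right _ _)
          omega

end EditDistAux

open EditDistAux in
/-- If `7` occurs neither in `x` nor in `y2`, and
`y = 7^{|x|} ++ y2 ++ 7^{|x|}`, then `δ(x,y)` is the minimum over ordered
partitions `x = x1 ++ x2 ++ x3` of
`δ(x1,7^{|x|}) + δ(x2,y2) + δ(x3,7^{|x|})`. -/
theorem editDist_three_partition
    (x y2 : List ℕ)
    (hx : ∀ c ∈ x, c ≠ 7) (hy2 : ∀ c ∈ y2, c ≠ 7) :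
    editDist x (List.replicate x.length 7 ++ y2 ++ List.replicate x.length 7) =
      sInf { c : ℕ | ∃ x1 x2 x3 : List ℕ, x = x1 ++ x2 ++ x3 ∧
        c = editDist x1 (List.replicate x.length 7) + editDist x2 y2 +
            editDist x3 (List.replicate x.length 7) } := by
  set A := List.replicate x.length 7 with hA
  apply le_antisymm
  · apply le_csInf
    · exact ⟨_, x, [], [], by simp, rfl⟩
    · rintro c ⟨x1, x2, x3, hsplit, rfl⟩
      have h1 : editDist ((x1 ++ x2) ++ x3) ((A ++ y2) ++ A) ≤
          editDist (x1 ++ x2) (A ++ y2) + editDist x3 A := ineq1 _ _ _ _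
      have h2 : editDist (x1 ++ x2) (A ++ y2) ≤ editDist x1 A + editDist x2 y2 :=
        ineq1 _ _ _ _
      rw [hsplit]
      omega
  · obtain ⟨p, x3, hp, h1⟩ := ineq2 x (A ++ y2) A
    obtain ⟨x1, x2, hq, h2⟩ := ineq2 p A y2
    refine le_trans (Nat.sInf_le ⟨x1, x2, x3, by rw [hp, hq], rfl⟩) ?_
    omega
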